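/- For fixed β ∈ L¹(γ_σ), the functional π ↦ H(π,β) := ∫_0^1 [β(u) + (1-u)^{-1} E_π[(L - β(u))_+]] dΓ_σ(u) is affine in π (H(λπ₁ + (1-λ)π₀, β) = λH(π₁,β) + (1-λ)H(π₀,β)) and upper semicontinuous with respect to weak convergence of probability measures in Π(μ,ν), provided L is upper semicontinuous and a(x)+b(y) ≤ L(x,y) ≤ A(x)+B(y) with A,a ∈ L¹(μ) and B,b ∈ L¹(ν), A,B lower semicontinuous and a,b upper semicontinuous. -/

import Mathlib

open MeasureTheory Filter Set BoundedContinuousFunction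
open scoped ENNReal NNReal


lemma usc_bcf_approx {Z : Type*} [PseudoMetricSpace Z] [Nonempty Z]
    (G : Z → ℝ) (hG : UpperSemicontinuous G) (hG0 : ∀ w, G w ≤ 0) :
    ∃ f : ℕ → Z →ᵇ ℝ, (∀ k w, G w ≤ f k w) ∧ (∀ k w, f k w ≤ 0) ∧
      (∀ w, Tendsto (fun k => f k w) atTop (nhds (G w))) := by
  set S : ℕ → Z → ℝ := fun k w => ⨆ w', (G w' - (k : ℝ) * dist w w') with hS
  have hbdd : ∀ (k : ℕ) (w : Z), BddAbove (Set.range fun w' => G w' - (k : ℝ) * dist w w') := by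
    intro k w
    refine ⟨0, ?_⟩
    rintro x ⟨w', rfl⟩
    show G w' - (k : ℝ) * dist w w' ≤ 0
    have h1 : (0:ℝ) ≤ (k : ℝ) * dist w w' := by positivity
    linarith [hG0 w']
  have hGS : ∀ k w, G w ≤ S k w := by
    intro k w
    have := le_ciSup (hbdd k w) w
    simpa using this
  have hS0 : ∀ k w, S k w ≤ 0 := by
    intro k w
    refine ciSup_le fun w' => ?_
    have h1 : (0:ℝ) ≤ (k : ℝ) * dist w w' := by positivity
    linarith [hG0 w']
  have hlip : ∀ (k : ℕ) (w₁ w₂ : Z), S k w₁ - S k w₂ ≤ (k : ℝ) * dist w₁ w₂ := by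
    intro k w₁ w₂
    rw [sub_le_iff_le_add]
    refine ciSup_le fun w' => ?_
    have h1 : dist w₂ w' ≤ dist w₂ w₁ + dist w₁ w' := dist_triangle w₂ w₁ w'
    have h1' : dist w₂ w₁ = dist w₁ w₂ := dist_comm _ _
    have h2 : G w' - (k : ℝ) * dist w₂ w' ≤ S k w₂ := le_ciSup (hbdd k w₂) w'
    nlinarith [Nat.cast_nonneg (α := ℝ) k]
  have hScont : ∀ k, Continuous (S k) := by
    intro k
    have : LipschitzWith k (S k) := by
      refine LipschitzWith.of_dist_le_mul fun w₁ w₂ => ?_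
      rw [Real.dist_eq, abs_sub_le_iff]
      constructor
      · have := hlip k w₁ w₂; push_cast; linarith
      · have := hlip k w₂ w₁; rw [dist_comm w₁ w₂]; push_cast; linarith [dist_comm w₂ w₁ ▸ this]
    exact this.continuous
  set g : ℕ → Z → ℝ := fun k w => max (S k w) (-(k : ℝ)) with hg
  have hgcont : ∀ k, Continuous (g k) := fun k => (hScont k).max continuous_const
  have hg0 : ∀ k w, g k w ≤ 0 := fun k w => max_le (hS0 k w) (neg_nonpos.mpr (by positivity))
  have hglb : ∀ k w, G w ≤ g k w := fun k w => le_trans (hGS k w) (le_max_left _ _)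
  have hgbd : ∀ (k : ℕ) (x y : Z), dist (g k x) (g k y) ≤ 2 * k := by
    intro k x y
    have hx2 : -(k:ℝ) ≤ g k x := le_max_right _ _
    have hy2 : -(k:ℝ) ≤ g k y := le_max_right _ _
    rw [Real.dist_eq, abs_sub_le_iff]
    constructor <;> [linarith [hg0 k x, hg0 k y]; linarith [hg0 k x, hg0 k y]]
  refine ⟨fun k => BoundedContinuousFunction.mkOfBound ⟨g k, hgcont k⟩ (2*k) (hgbd k), ?_, ?_, ?_⟩
  · exact fun k w => hglb k w
  · exact fun k w => hg0 k w
  · intro w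
    show Tendsto (fun k => g k w) atTop (nhds (G w))
    have hanti : Antitone fun k => g k w := by
      intro k l hkl
      have hkl' : (k : ℝ) ≤ (l : ℝ) := by exact_mod_cast hkl
      refine max_le_max ?_ (by linarith)
      refine ciSup_le fun w' => le_trans ?_ (le_ciSup (hbdd k w) w')
      have : (k:ℝ) * dist w w' ≤ (l:ℝ) * dist w w' := by
        nlinarith [dist_nonneg (x := w) (y := w')]
      linarith
    have htends := tendsto_atTop_ciInf hanti ⟨G w, by rintro x ⟨k, rfl⟩; exact hglb k w⟩
    have hinf : ⨅ k, g k w = G w := by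
      refine le_antisymm ?_ (le_ciInf fun k => hglb k w)
      refine le_of_forall_pos_le_add fun ε hε => ?_
      obtain ⟨δ, hδ, hball⟩ : ∃ δ > 0, ∀ w', dist w' w < δ → G w' < G w + ε := by
        have h := hG w (G w + ε) (by linarith)
        rw [Metric.eventually_nhds_iff] at h
        obtain ⟨δ, hδ, h⟩ := h
        exact ⟨δ, hδ, fun w' hw' => h hw'⟩
      obtain ⟨K₁, hK₁⟩ := exists_nat_ge ((-(G w) - ε) / δ)
      obtain ⟨K₂, hK₂⟩ := exists_nat_ge (-(G w) - ε)
      set K := max K₁ K₂ with hK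
      have hK1 : (-(G w) - ε) / δ ≤ (K : ℝ) := le_trans hK₁ (by exact_mod_cast le_max_left K₁ K₂)
      have hK2 : -(G w) - ε ≤ (K : ℝ) := le_trans hK₂ (by exact_mod_cast le_max_right K₁ K₂)
      have hKδ : -(G w) - ε ≤ (K : ℝ) * δ := by
        rw [div_le_iff₀ hδ] at hK1; linarith
      have hgK : g K w ≤ G w + ε := by
        refine max_le (ciSup_le fun w' => ?_) (by linarith)
        by_cases hd : dist w' w < δ
        · have := hball w' hd
          have h1 : (0:ℝ) ≤ (K : ℝ) * dist w w' := by positivity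
          linarith
        · push_neg at hd
          have h1 : (K : ℝ) * δ ≤ (K : ℝ) * dist w w' := by
            rw [dist_comm w w']
            exact mul_le_mul_of_nonneg_left hd (by positivity)
          linarith [hG0 w']
      exact le_trans (ciInf_le ⟨G w, by rintro x ⟨k, rfl⟩; exact hglb k w⟩ K) hgK
    rwa [hinf] at htends

lemma limsup_integral_le_of_usc {Z : Type*} [MeasurableSpace Z] [PseudoMetricSpace Z]
    [OpensMeasurableSpace Z] [Nonempty Z]
    (G : Z → ℝ) (hG : UpperSemicontinuous G) (hG0 : ∀ w, G w ≤ 0)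
    (πs : ℕ → Measure Z) (π : Measure Z)
    (hn : ∀ n, IsProbabilityMeasure (πs n)) (hp : IsProbabilityMeasure π)
    (hint : ∀ n, Integrable G (πs n)) (hintπ : Integrable G π)
    (c : ℝ) (hc : ∀ n, c ≤ ∫ w, G w ∂(πs n))
    (hw : ∀ f : Z →ᵇ ℝ, Tendsto (fun n => ∫ w, f w ∂(πs n)) atTop (nhds (∫ w, f w ∂π))) :
    limsup (fun n => ∫ w, G w ∂(πs n)) atTop ≤ ∫ w, G w ∂π := by
  obtain ⟨f, hGf, hf0, htd⟩ := usc_bcf_approx G hG hG0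
  have hfk_int : ∀ (k : ℕ) (m : Measure Z), IsProbabilityMeasure m → Integrable (f k) m := by
    intro k m hm
    exact (f k).integrable m
  have hk : ∀ k, limsup (fun n => ∫ w, G w ∂(πs n)) atTop ≤ ∫ w, f k w ∂π := by
    intro k
    have h1 : ∀ n, ∫ w, G w ∂(πs n) ≤ ∫ w, f k w ∂(πs n) := fun n =>
      integral_mono (hint n) (hfk_int k _ (hn n)) (hGf k)
    have hcob : IsCoboundedUnder (· ≤ ·) atTop (fun n => ∫ w, G w ∂(πs n)) :=
      (isBoundedUnder_of (r := (· ≥ ·)) ⟨c, fun n => hc n⟩).isCoboundedUnder_le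
    have hbd : IsBoundedUnder (· ≤ ·) atTop (fun n => ∫ w, f k w ∂(πs n)) :=
      (hw (f k)).isBoundedUnder_le
    calc limsup (fun n => ∫ w, G w ∂(πs n)) atTop
        ≤ limsup (fun n => ∫ w, f k w ∂(πs n)) atTop :=
          limsup_le_limsup (Eventually.of_forall h1) hcob hbd
      _ = ∫ w, f k w ∂π := (hw (f k)).limsup_eq
  have hdom : Tendsto (fun k => ∫ w, f k w ∂π) atTop (nhds (∫ w, G w ∂π)) := by
    refine tendsto_integral_of_dominated_convergence (fun w => |G w|)
      (fun k => ((f k).continuous).aestronglyMeasurable) hintπ.abs ?_ ?_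
    · intro k
      refine Eventually.of_forall fun w => ?_
      rw [Real.norm_eq_abs, abs_le]
      constructor
      · have := hGf k w
        have := neg_abs_le (G w)
        linarith
      · exact le_trans (hf0 k w) (abs_nonneg _)
    · exact Eventually.of_forall fun w => htd w
  exact ge_of_tendsto' hdom hk

lemma limsup_integral_le_of_usc' {Z : Type*} [TopologicalSpace Z] [PolishSpace Z]
    [MeasurableSpace Z] [BorelSpace Z] [Nonempty Z]
    (G : Z → ℝ) (hG : UpperSemicontinuous G) (hG0 : ∀ w, G w ≤ 0)
    (πs : ℕ → Measure Z) (π : Measure Z)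
    (hn : ∀ n, IsProbabilityMeasure (πs n)) (hp : IsProbabilityMeasure π)
    (hint : ∀ n, Integrable G (πs n)) (hintπ : Integrable G π)
    (c : ℝ) (hc : ∀ n, c ≤ ∫ w, G w ∂(πs n))
    (hw : ∀ f : Z →ᵇ ℝ, Tendsto (fun n => ∫ w, f w ∂(πs n)) atTop (nhds (∫ w, f w ∂π))) :
    limsup (fun n => ∫ w, G w ∂(πs n)) atTop ≤ ∫ w, G w ∂π := by
  letI := TopologicalSpace.upgradeIsCompletelyMetrizable Z
  exact limsup_integral_le_of_usc G hG hG0 πs π hn hp hint hintπ c hc hw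

set_option maxHeartbeats 2000000 in
theorem stmt_9 {X Y : Type*}
    [TopologicalSpace X] [PolishSpace X] [MeasurableSpace X] [BorelSpace X]
    [TopologicalSpace Y] [PolishSpace Y] [MeasurableSpace Y] [BorelSpace Y]
    (μ : Measure X) [IsProbabilityMeasure μ] (ν : Measure Y) [IsProbabilityMeasure ν]
    (L : X × Y → ℝ) (hLusc : UpperSemicontinuous L)
    (A : X → ℝ) (B : Y → ℝ) (a : X → ℝ) (b : Y → ℝ)
    (hA : Integrable A μ) (hB : Integrable B ν) (ha : Integrable a μ) (hb : Integrable b ν)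
    (hAlsc : LowerSemicontinuous A) (hBlsc : LowerSemicontinuous B)
    (hausc : UpperSemicontinuous a) (hbusc : UpperSemicontinuous b)
    (hub : ∀ x y, L (x, y) ≤ A x + B y) (hlb : ∀ x y, a x + b y ≤ L (x, y))
    -- the spectral function σ and associated measures γ_σ, Γ_σ
    (σ : ℝ → ℝ)
    (hσ_nonneg : ∀ u ∈ Set.Ico (0:ℝ) 1, 0 ≤ σ u)
    (hσ_mono : MonotoneOn σ (Set.Ico (0:ℝ) 1))
    (hσ_bdd : ∃ M, ∀ u ∈ Set.Ico (0:ℝ) 1, σ u ≤ M)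
    (hσ_rc : ∀ u ∈ Set.Ico (0:ℝ) 1, ContinuousWithinAt σ (Set.Ici u) u)
    (hσ_one : ∫ u in (0:ℝ)..1, σ u = 1)
    (γ : Measure ℝ) [IsFiniteMeasure γ]
    (hγ_supp : γ (Set.Ico (0:ℝ) 1)ᶜ = 0)
    (hγ_cdf : ∀ u ∈ Set.Ico (0:ℝ) 1, γ (Set.Icc 0 u) = ENNReal.ofReal (σ u))
    (Γ : Measure ℝ) [IsProbabilityMeasure Γ]
    (hΓ : Γ = γ.withDensity (fun u => ENNReal.ofReal (1 - u)))
    -- β ∈ L¹(γ_σ)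
    (β : ℝ → ℝ) (hβmeas : Measurable β) (hβ : Integrable β γ)
    -- the functional H(·, β)
    (H : Measure (X × Y) → ℝ)
    (hH : ∀ π : Measure (X × Y),
      H π = ∫ u, (β u + (1 - u)⁻¹ * ∫ w, max (L w - β u) 0 ∂π) ∂Γ) :
    -- H(·, β) is affine in π
    (∀ (π₀ π₁ : Measure (X × Y)), IsProbabilityMeasure π₀ → IsProbabilityMeasure π₁ →
      π₀.map Prod.fst = μ → π₀.map Prod.snd = ν →
      π₁.map Prod.fst = μ → π₁.map Prod.snd = ν →
      ∀ lam : ℝ, lam ∈ Set.Ioo (0:ℝ) 1 →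
        H (ENNReal.ofReal lam • π₁ + ENNReal.ofReal (1 - lam) • π₀)
          = lam * H π₁ + (1 - lam) * H π₀) ∧
    -- H(·, β) is upper semicontinuous along weakly convergent sequences in Π(μ,ν)
    (∀ (πn : ℕ → Measure (X × Y)) (π : Measure (X × Y)),
      (∀ n, IsProbabilityMeasure (πn n)) → IsProbabilityMeasure π →
      (∀ n, (πn n).map Prod.fst = μ ∧ (πn n).map Prod.snd = ν) →
      π.map Prod.fst = μ → π.map Prod.snd = ν →
      (∀ f : X × Y →ᵇ ℝ,
        Tendsto (fun n => ∫ w, f w ∂(πn n)) atTop (nhds (∫ w, f w ∂π))) →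
      Filter.limsup (fun n => H (πn n)) atTop ≤ H π) := by
  -- nonemptiness
  have hXne : Nonempty X := by
    by_contra h
    rw [not_nonempty_iff] at h
    have h1 : μ Set.univ = 1 := measure_univ
    rw [Set.univ_eq_empty_iff.2 h, measure_empty] at h1
    exact zero_ne_one h1
  have hYne : Nonempty Y := by
    by_contra h
    rw [not_nonempty_iff] at h
    have h1 : ν Set.univ = 1 := measure_univ
    rw [Set.univ_eq_empty_iff.2 h, measure_empty] at h1
    exact zero_ne_one h1
  -- basic measurability
  have hLm : Measurable L := hLusc.measurable
  have hAm : Measurable A := hAlsc.measurable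
  have hBm : Measurable B := hBlsc.measurable
  -- the function Φ and K
  set Φ : ℝ → ℝ := fun t => ∫ u, max (t - β u) 0 ∂γ with hΦdef
  set K : X × Y → ℝ := fun w => ∫ u, max (L w - β u) 0 ∂γ with hKdef
  set mγ : ℝ := (γ Set.univ).toReal with hmγdef
  set cβ' : ℝ := ∫ u, |β u| ∂γ with hcβ'def
  have hΦint : ∀ t : ℝ, Integrable (fun u => max (t - β u) 0) γ := by
    intro t
    refine Integrable.mono' ((integrable_const |t|).add hβ.abs)
      (((measurable_const.sub hβmeas).max measurable_const).aestronglyMeasurable) ?_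
    refine Eventually.of_forall fun u => ?_
    rw [Real.norm_eq_abs, abs_of_nonneg (le_max_right _ _)]
    refine max_le ?_ (add_nonneg (abs_nonneg t) (abs_nonneg (β u)))
    show t - β u ≤ |t| + |β u|
    have h1 := neg_abs_le (β u)
    have h2 := le_abs_self t
    linarith
  have hΦmono : Monotone Φ := by
    intro t s hts
    exact integral_mono (hΦint t) (hΦint s) fun u => max_le_max (by linarith) le_rfl
  have hΦlip : LipschitzWith (γ Set.univ).toNNReal Φ := by
    refine LipschitzWith.of_dist_le_mul fun t s => ?_
    rw [Real.dist_eq, Real.dist_eq]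
    have h1 : Φ t - Φ s = ∫ u, (max (t - β u) 0 - max (s - β u) 0) ∂γ :=
      (integral_sub (hΦint t) (hΦint s)).symm
    have h2 : |∫ u, (max (t - β u) 0 - max (s - β u) 0) ∂γ|
        ≤ ∫ u, |max (t - β u) 0 - max (s - β u) 0| ∂γ := by
      simpa [Real.norm_eq_abs] using
        norm_integral_le_integral_norm (fun u => max (t - β u) 0 - max (s - β u) 0) (μ := γ)
    have h3 : ∫ u, |max (t - β u) 0 - max (s - β u) 0| ∂γ ≤ ∫ _u, |t - s| ∂γ := by
      refine integral_mono ((hΦint t).sub (hΦint s)).abs (integrable_const _) fun u => ?_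
      have := abs_max_sub_max_le_abs (t - β u) (s - β u) 0
      simpa using this
    have h4 : ∫ _u : ℝ, |t - s| ∂γ = (γ Set.univ).toReal * |t - s| := by
      rw [integral_const, smul_eq_mul]; rfl
    calc |Φ t - Φ s| ≤ ∫ _u, |t - s| ∂γ := by rw [h1]; exact le_trans h2 h3
      _ = ((γ Set.univ).toNNReal : ℝ) * |t - s| := by rw [h4]; rfl
  have hΦcont : Continuous Φ := hΦlip.continuous
  have hKΦ : K = Φ ∘ L := rfl
  have hKusc : UpperSemicontinuous K := by
    rw [hKΦ]; exact hΦcont.comp_upperSemicontinuous hLusc hΦmono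
  have hKm : Measurable K := by
    rw [hKΦ]; exact hΦcont.measurable.comp hLm
  have hK0 : ∀ w, 0 ≤ K w := fun w =>
    integral_nonneg fun u => le_max_right _ _
  -- the lsc dominating function φ
  set φ : X × Y → ℝ := fun w => cβ' + mγ * (max (A w.1) 0 + max (B w.2) 0) with hφdef
  have hφm : Measurable φ := by
    apply Measurable.const_add
    exact ((((hAm.comp measurable_fst).max measurable_const).add
      ((hBm.comp measurable_snd).max measurable_const)).const_mul mγ)
  have hmγ0 : 0 ≤ mγ := ENNReal.toReal_nonneg
  have hφlsc : LowerSemicontinuous φ := by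
    have h1 : LowerSemicontinuous fun w : X × Y => max (A w.1) 0 + max (B w.2) 0 := by
      have hmax : Continuous fun t : ℝ => max t 0 := continuous_id.max continuous_const
      have hmaxm : Monotone fun t : ℝ => max t 0 := fun t s hts => max_le_max hts le_rfl
      have hA1 : LowerSemicontinuous fun x : X => max (A x) 0 :=
        hmax.comp_lowerSemicontinuous hAlsc hmaxm
      have hB1 : LowerSemicontinuous fun y : Y => max (B y) 0 :=
        hmax.comp_lowerSemicontinuous hBlsc hmaxm
      refine LowerSemicontinuous.add ?_ ?_
      · exact hA1.comp continuous_fst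
      · exact hB1.comp continuous_snd
    have hg : Continuous fun t : ℝ => cβ' + mγ * t := by continuity
    have hgm : Monotone fun t : ℝ => cβ' + mγ * t := fun t s hts => by
      simp only; nlinarith
    exact hg.comp_lowerSemicontinuous h1 hgm
  -- pointwise bound max (L w - β u) 0 ≤ |β u| + (max (A w.1) 0 + max (B w.2) 0)
  have hptbd : ∀ (u : ℝ) (w : X × Y),
      max (L w - β u) 0 ≤ |β u| + (max (A w.1) 0 + max (B w.2) 0) := by
    intro u w
    refine max_le ?_ (add_nonneg (abs_nonneg _)
      (add_nonneg (le_max_right _ _) (le_max_right _ _)))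
    have h1 : L w ≤ A w.1 + B w.2 := hub w.1 w.2
    have h2 : A w.1 ≤ max (A w.1) 0 := le_max_left _ _
    have h3 : B w.2 ≤ max (B w.2) 0 := le_max_left _ _
    have h4 : -β u ≤ |β u| := neg_le_abs _
    linarith
  -- K ≤ φ
  have hKφle : ∀ w, K w ≤ φ w := by
    intro w
    have h1 : K w ≤ ∫ u, (|β u| + (max (A w.1) 0 + max (B w.2) 0)) ∂γ :=
      integral_mono (hΦint (L w)) (hβ.abs.add (integrable_const _)) fun u => hptbd u w
    have h2 : ∫ u, (|β u| + (max (A w.1) 0 + max (B w.2) 0)) ∂γ = φ w := by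
      rw [integral_add hβ.abs (integrable_const _), integral_const, smul_eq_mul]; rfl
    rw [← h2]; exact h1
  -- measurability of the joint function
  have hhm : Measurable (fun p : ℝ × (X × Y) => max (L p.2 - β p.1) 0) :=
    ((hLm.comp measurable_snd).sub (hβmeas.comp measurable_fst)).max measurable_const
  -- marginal transfer
  have hmargA : ∀ (π' : Measure (X × Y)), π'.map Prod.fst = μ →
      Integrable (fun w : X × Y => max (A w.1) 0) π' ∧
      ∫ w, max (A w.1) 0 ∂π' = ∫ x, max (A x) 0 ∂μ := by
    intro π' hm
    have hint : Integrable (fun x => max (A x) 0) μ := hA.pos_part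
    have h1 : Integrable (fun x => max (A x) 0) (π'.map Prod.fst) := hm ▸ hint
    have h2 := (integrable_map_measure (hm ▸ hint.aestronglyMeasurable :
        AEStronglyMeasurable (fun x => max (A x) 0) (π'.map Prod.fst))
        measurable_fst.aemeasurable).1 h1
    refine ⟨h2, ?_⟩
    rw [← hm, integral_map measurable_fst.aemeasurable]
    exact hm ▸ hint.aestronglyMeasurable
  have hmargB : ∀ (π' : Measure (X × Y)), π'.map Prod.snd = ν →
      Integrable (fun w : X × Y => max (B w.2) 0) π' ∧
      ∫ w, max (B w.2) 0 ∂π' = ∫ y, max (B y) 0 ∂ν := by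
    intro π' hm
    have hint : Integrable (fun y => max (B y) 0) ν := hB.pos_part
    have h1 : Integrable (fun y => max (B y) 0) (π'.map Prod.snd) := hm ▸ hint
    have h2 := (integrable_map_measure (hm ▸ hint.aestronglyMeasurable :
        AEStronglyMeasurable (fun y => max (B y) 0) (π'.map Prod.snd))
        measurable_snd.aemeasurable).1 h1
    refine ⟨h2, ?_⟩
    rw [← hm, integral_map measurable_snd.aemeasurable]
    exact hm ▸ hint.aestronglyMeasurable
  set cφ : ℝ := cβ' + mγ * ((∫ x, max (A x) 0 ∂μ) + (∫ y, max (B y) 0 ∂ν)) with hcφdef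
  have hφint : ∀ (π' : Measure (X × Y)), IsProbabilityMeasure π' →
      π'.map Prod.fst = μ → π'.map Prod.snd = ν →
      Integrable φ π' ∧ ∫ w, φ w ∂π' = cφ := by
    intro π' hprob hm1 hm2
    haveI := hprob
    obtain ⟨hiA, heA⟩ := hmargA π' hm1
    obtain ⟨hiB, heB⟩ := hmargB π' hm2
    have hiAB : Integrable (fun w : X × Y => max (A w.1) 0 + max (B w.2) 0) π' :=
      hiA.add hiB
    have hiM : Integrable (fun w : X × Y => mγ * (max (A w.1) 0 + max (B w.2) 0)) π' :=
      hiAB.const_mul mγ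
    constructor
    · exact (integrable_const cβ').add hiM
    · have e0 : ∫ w, φ w ∂π'
          = ∫ w, (cβ' + mγ * (max (A w.1) 0 + max (B w.2) 0)) ∂π' := rfl
      rw [e0, integral_add (integrable_const cβ') hiM,
        integral_const, integral_const_mul, integral_add hiA hiB, heA, heB]
      simp [measure_univ]; rfl
  -- a.e. facts on γ
  have haeγ : ∀ᵐ u ∂γ, u ∈ Set.Ico (0:ℝ) 1 := by
    rw [ae_iff]
    exact hγ_supp
  -- rewrite Γ as withDensity of an ℝ≥0 function
  have hρm : Measurable fun u : ℝ => Real.toNNReal (1 - u) :=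
    (measurable_const.sub measurable_id).real_toNNReal
  have hΓ' : Γ = γ.withDensity (fun u => ((Real.toNNReal (1 - u) : ℝ≥0) : ℝ≥0∞)) := by
    rw [hΓ]
    rfl
  -- the key identity
  have key : ∀ (π' : Measure (X × Y)), IsProbabilityMeasure π' →
      π'.map Prod.fst = μ → π'.map Prod.snd = ν →
      Integrable K π' ∧ H π' = (∫ u, β u ∂Γ) + ∫ w, K w ∂π' := by
    intro π' hprob hm1 hm2
    haveI := hprob
    obtain ⟨hiA, heA⟩ := hmargA π' hm1
    obtain ⟨hiB, heB⟩ := hmargB π' hm2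
    set cAB : ℝ := ∫ w, (max (A w.1) 0 + max (B w.2) 0) ∂π' with hcABdef
    have hiAB : Integrable (fun w : X × Y => max (A w.1) 0 + max (B w.2) 0) π' := hiA.add hiB
    -- per-u integrability wrt π'
    have hπu : ∀ u : ℝ, Integrable (fun w => max (L w - β u) 0) π' := by
      intro u
      refine Integrable.mono' ((integrable_const |β u|).add hiAB)
        (((hLm.sub measurable_const).max measurable_const).aestronglyMeasurable) ?_
      refine Eventually.of_forall fun w => ?_
      rw [Real.norm_eq_abs, abs_of_nonneg (le_max_right _ _)]
      exact hptbd u w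
    set F : ℝ → ℝ := fun u => ∫ w, max (L w - β u) 0 ∂π' with hFdef
    have hFsm : StronglyMeasurable F :=
      hhm.stronglyMeasurable.integral_prod_right'
    have hF0 : ∀ u, 0 ≤ F u := fun u => integral_nonneg fun w => le_max_right _ _
    have hFle : ∀ u, F u ≤ |β u| + cAB := by
      intro u
      have h1 : F u ≤ ∫ w, (|β u| + (max (A w.1) 0 + max (B w.2) 0)) ∂π' :=
        integral_mono (hπu u) ((integrable_const _).add hiAB) fun w => hptbd u w
      rw [integral_add (integrable_const _) hiAB, integral_const] at h1
      simpa [measure_univ] using h1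
    have hintF : Integrable F γ := by
      refine Integrable.mono' (hβ.abs.add (integrable_const cAB))
        hFsm.aestronglyMeasurable (Eventually.of_forall fun u => ?_)
      show ‖F u‖ ≤ |β u| + cAB
      rw [Real.norm_eq_abs, abs_of_nonneg (hF0 u)]
      exact hFle u
    -- integrability on the product and swapping
    have hprod : Integrable (fun p : ℝ × (X × Y) => max (L p.2 - β p.1) 0) (γ.prod π') := by
      rw [integrable_prod_iff hhm.aestronglyMeasurable]
      constructor
      · exact Eventually.of_forall fun u => hπu u
      · refine hintF.congr (Eventually.of_forall fun u => ?_)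
        refine integral_congr_ae (Eventually.of_forall fun w => ?_)
        show max (L w - β u) 0 = ‖max (L w - β u) 0‖
        rw [Real.norm_eq_abs, abs_of_nonneg (le_max_right _ _)]
    have hKint : Integrable K π' := hprod.integral_prod_right
    refine ⟨hKint, ?_⟩
    have hswap : ∫ u, F u ∂γ = ∫ w, K w ∂π' :=
      integral_integral_swap hprod
    -- rewrite H π' over γ
    have hstep1 : H π' = ∫ u, (Real.toNNReal (1 - u) : ℝ≥0) •
        (β u + (1 - u)⁻¹ * F u) ∂γ := by
      rw [hH π', hΓ']
      exact integral_withDensity_eq_integral_smul hρm _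
    have hstep2 : ∫ u, (Real.toNNReal (1 - u) : ℝ≥0) • (β u + (1 - u)⁻¹ * F u) ∂γ
        = ∫ u, ((1 - u) * β u + F u) ∂γ := by
      refine integral_congr_ae (haeγ.mono fun u hu => ?_)
      show (Real.toNNReal (1 - u) : ℝ≥0) • (β u + (1 - u)⁻¹ * F u) = (1 - u) * β u + F u
      have h1 : (0:ℝ) < 1 - u := by
        have := hu.2; linarith
      have h2 : ((Real.toNNReal (1 - u) : ℝ≥0) : ℝ) = 1 - u := Real.coe_toNNReal _ h1.le
      rw [NNReal.smul_def, smul_eq_mul, h2, mul_add, ← mul_assoc,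
        mul_inv_cancel₀ h1.ne', one_mul]
    have hint1 : Integrable (fun u => (1 - u) * β u) γ := by
      refine Integrable.mono' hβ.abs
        (((measurable_const.sub measurable_id).mul hβmeas).aestronglyMeasurable)
        (haeγ.mono fun u hu => ?_)
      rw [Real.norm_eq_abs, abs_mul]
      have h1 : |1 - u| ≤ 1 := by
        rw [abs_le]; constructor <;> [linarith [hu.2]; linarith [hu.1]]
      nlinarith [abs_nonneg (β u), abs_nonneg (1 - u)]
    have hint2 : Integrable F γ := hintF
    have hstep3 : ∫ u, ((1 - u) * β u + F u) ∂γ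
        = (∫ u, (1 - u) * β u ∂γ) + ∫ u, F u ∂γ := integral_add hint1 hint2
    have hstep4 : ∫ u, β u ∂Γ = ∫ u, (1 - u) * β u ∂γ := by
      rw [hΓ']
      rw [integral_withDensity_eq_integral_smul hρm]
      refine integral_congr_ae (haeγ.mono fun u hu => ?_)
      show (Real.toNNReal (1 - u) : ℝ≥0) • β u = (1 - u) * β u
      have h1 : (0:ℝ) ≤ 1 - u := by have := hu.2; linarith
      rw [NNReal.smul_def, smul_eq_mul, Real.coe_toNNReal _ h1]
    rw [hstep1, hstep2, hstep3, hstep4, hswap]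
  -- ∫ K bounds for couplings
  have hKbd : ∀ (π' : Measure (X × Y)), IsProbabilityMeasure π' →
      π'.map Prod.fst = μ → π'.map Prod.snd = ν →
      0 ≤ ∫ w, K w ∂π' ∧ ∫ w, K w ∂π' ≤ cφ := by
    intro π' hprob hm1 hm2
    haveI := hprob
    obtain ⟨hφi, hφe⟩ := hφint π' hprob hm1 hm2
    obtain ⟨hKi, _⟩ := key π' hprob hm1 hm2
    refine ⟨integral_nonneg hK0, ?_⟩
    rw [← hφe]
    exact integral_mono hKi hφi hKφle
  constructor
  · -- affinity
    intro π₀ π₁ hp0 hp1 h0f h0s h1f h1s lam hlam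
    set c₁ : ℝ≥0∞ := ENNReal.ofReal lam with hc₁def
    set c₀ : ℝ≥0∞ := ENNReal.ofReal (1 - lam) with hc₀def
    have hlam0 : 0 ≤ lam := hlam.1.le
    have hlam1 : 0 ≤ 1 - lam := by linarith [hlam.2]
    have hsum : c₁ + c₀ = 1 := by
      rw [hc₁def, hc₀def, ← ENNReal.ofReal_add hlam0 hlam1]
      norm_num
    set π' : Measure (X × Y) := c₁ • π₁ + c₀ • π₀ with hπ'def
    have hπ'prob : IsProbabilityMeasure π' := by
      constructor
      rw [hπ'def]
      rw [Measure.add_apply, Measure.smul_apply, Measure.smul_apply,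
        measure_univ, measure_univ, smul_eq_mul, smul_eq_mul, mul_one, mul_one, hsum]
    have hπ'f : π'.map Prod.fst = μ := by
      rw [hπ'def, Measure.map_add _ _ measurable_fst, Measure.map_smul, Measure.map_smul,
        h1f, h0f, ← add_smul, hsum, one_smul]
    have hπ's : π'.map Prod.snd = ν := by
      rw [hπ'def, Measure.map_add _ _ measurable_snd, Measure.map_smul, Measure.map_smul,
        h1s, h0s, ← add_smul, hsum, one_smul]
    obtain ⟨hKi', he'⟩ := key π' hπ'prob hπ'f hπ's
    obtain ⟨hKi1, he1⟩ := key π₁ hp1 h1f h1s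
    obtain ⟨hKi0, he0⟩ := key π₀ hp0 h0f h0s
    have hsplit : ∫ w, K w ∂π' = lam * (∫ w, K w ∂π₁) + (1 - lam) * (∫ w, K w ∂π₀) := by
      rw [hπ'def, integral_add_measure (hKi1.smul_measure ENNReal.ofReal_ne_top)
        (hKi0.smul_measure ENNReal.ofReal_ne_top),
        integral_smul_measure, integral_smul_measure,
        ENNReal.toReal_ofReal hlam0, ENNReal.toReal_ofReal hlam1, smul_eq_mul, smul_eq_mul]
    rw [he', he1, he0, hsplit]
    ring
  · -- upper semicontinuity
    intro πs π hns hp hmargs hm1 hm2 hwconv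
    set G : X × Y → ℝ := fun w => K w - φ w with hGdef
    have hGusc : UpperSemicontinuous G := by
      have h1 : UpperSemicontinuous fun w : X × Y => -φ w :=
        continuous_neg.comp_lowerSemicontinuous_antitone hφlsc fun t s hts =>
          neg_le_neg hts
      have h2 := hKusc.add h1
      have h3 : G = fun z => K z + -φ z := by funext z; simp [hGdef, sub_eq_add_neg]
      rw [h3]; exact h2
    have hG0 : ∀ w, G w ≤ 0 := fun w => sub_nonpos.2 (hKφle w)
    have hGints : ∀ n, Integrable G (πs n) := fun n =>
      ((key (πs n) (hns n) (hmargs n).1 (hmargs n).2).1).sub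
        ((hφint (πs n) (hns n) (hmargs n).1 (hmargs n).2).1)
    have hGintπ : Integrable G π :=
      ((key π hp hm1 hm2).1).sub ((hφint π hp hm1 hm2).1)
    have hGval : ∀ n, ∫ w, G w ∂(πs n) = (∫ w, K w ∂(πs n)) - cφ := by
      intro n
      rw [hGdef, integral_sub ((key (πs n) (hns n) (hmargs n).1 (hmargs n).2).1)
        ((hφint (πs n) (hns n) (hmargs n).1 (hmargs n).2).1),
        (hφint (πs n) (hns n) (hmargs n).1 (hmargs n).2).2]
    have hGvalπ : ∫ w, G w ∂π = (∫ w, K w ∂π) - cφ := by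
      rw [hGdef, integral_sub ((key π hp hm1 hm2).1) ((hφint π hp hm1 hm2).1),
        (hφint π hp hm1 hm2).2]
    have hlbd : ∀ n, -cφ ≤ ∫ w, G w ∂(πs n) := by
      intro n
      rw [hGval n]
      have := (hKbd (πs n) (hns n) (hmargs n).1 (hmargs n).2).1
      linarith
    have hcore := limsup_integral_le_of_usc' G hGusc hG0 πs π hns hp hGints hGintπ
      (-cφ) hlbd hwconv
    -- rewrite H in terms of G
    set cβΓ : ℝ := ∫ u, β u ∂Γ with hcβΓdef
    have hHn : ∀ n, H (πs n) = (∫ w, G w ∂(πs n)) + (cβΓ + cφ) := by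
      intro n
      rw [(key (πs n) (hns n) (hmargs n).1 (hmargs n).2).2, hGval n]
      ring
    have hHπ : H π = (∫ w, G w ∂π) + (cβΓ + cφ) := by
      rw [(key π hp hm1 hm2).2, hGvalπ]
      ring
    have hbdd : IsBoundedUnder (· ≤ ·) atTop (fun n => ∫ w, G w ∂(πs n)) :=
      isBoundedUnder_of ⟨0, fun n => integral_nonpos fun w => hG0 w⟩
    have hcob : IsCoboundedUnder (· ≤ ·) atTop (fun n => ∫ w, G w ∂(πs n)) :=
      (isBoundedUnder_of (r := (· ≥ ·)) ⟨-cφ, fun n => hlbd n⟩).isCoboundedUnder_le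
    calc limsup (fun n => H (πs n)) atTop
        = limsup (fun n => (∫ w, G w ∂(πs n)) + (cβΓ + cφ)) atTop := by
          congr 1; funext n; exact hHn n
      _ = (limsup (fun n => ∫ w, G w ∂(πs n)) atTop) + (cβΓ + cφ) :=
          limsup_add_const atTop _ _ hbdd hcob
      _ ≤ (∫ w, G w ∂π) + (cβΓ + cφ) := by linarith [hcore]
      _ = H π := hHπ.symm
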